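/- Let (G, ω, τ) be a weighted graph where τ is degenerate with degeneracy ordering R: u₁,…,uₙ. Define incentives p(uᵢ) = τ(uᵢ) − ∑_{e ∈ E(uᵢ,R)} ω(e) ≥ 0, where E(uᵢ,R) is the set of edges between uᵢ and {u₁,…,u_{i−1}}. Then p is a target vector for (G, ω, τ) (the incentive activation process activates all of V(G)), and its total size is ∑_v τ(v) − ∑_{e ∈ E(G)} ω(e). -/
import Mathlib


open Finset

variable {V : Type*}

/-- Total weight of edges between `x` and active set `A`. -/
def Influence [Fintype V] [DecidableEq V] (G : SimpleGraph V) [DecidableRel G.Adj]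
    (ω : Sym2 V → ℚ) (A : Finset V) (x : V) : ℚ :=
  ∑ y ∈ A.filter (G.Adj x), ω s(x, y)

/-- Weighted activation process started from `A₀`. -/
def ActiveW [Fintype V] [DecidableEq V] (G : SimpleGraph V) [DecidableRel G.Adj]
    (ω : Sym2 V → ℚ) (τ : V → ℚ) (A₀ : Finset V) : ℕ → Finset V
  | 0 => A₀
  | t + 1 => ActiveW G ω τ A₀ t ∪
      Finset.univ.filter (fun x => τ x ≤ Influence G ω (ActiveW G ω τ A₀ t) x)

/-- `A₀` is a target set (dynamic monopoly): every vertex eventually activates. -/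
def IsTargetSetW [Fintype V] [DecidableEq V] (G : SimpleGraph V) [DecidableRel G.Adj]
    (ω : Sym2 V → ℚ) (τ : V → ℚ) (A₀ : Finset V) : Prop :=
  ∀ v : V, ∃ t, v ∈ ActiveW G ω τ A₀ t

/-- Incentive activation process for incentive assignment `p`. -/
def ActiveP [Fintype V] [DecidableEq V] (G : SimpleGraph V) [DecidableRel G.Adj]
    (ω : Sym2 V → ℚ) (τ : V → ℚ) (p : V → ℚ) : ℕ → Finset V
  | 0 => Finset.univ.filter (fun v => τ v ≤ p v)
  | t + 1 => ActiveP G ω τ p t ∪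
      Finset.univ.filter (fun x => τ x ≤ Influence G ω (ActiveP G ω τ p t) x + p x)

/-- `p` is a target vector: its incentive process activates every vertex. -/
def IsTargetVector [Fintype V] [DecidableEq V] (G : SimpleGraph V) [DecidableRel G.Adj]
    (ω : Sym2 V → ℚ) (τ : V → ℚ) (p : V → ℚ) : Prop :=
  ∀ v : V, ∃ t, v ∈ ActiveP G ω τ p t

/-- `τ` is a degenerate threshold assignment: every nonempty induced subgraph
(given by its vertex set `S`) has a vertex whose threshold is at least the total
weight of the edges of the induced subgraph incident to it. -/
def DegenerateW [Fintype V] [DecidableEq V] (G : SimpleGraph V) [DecidableRel G.Adj]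
    (ω : Sym2 V → ℚ) (τ : V → ℚ) : Prop :=
  ∀ S : Finset V, S.Nonempty → ∃ x ∈ S, Influence G ω S x ≤ τ x

/-- `u` is a degeneracy ordering: each vertex's threshold is at least the total
weight of edges to earlier vertices. -/
def IsDegOrder [Fintype V] [DecidableEq V] (G : SimpleGraph V) [DecidableRel G.Adj]
    (ω : Sym2 V → ℚ) (τ : V → ℚ) (u : Fin (Fintype.card V) ≃ V) : Prop :=
  ∀ i, (∑ j ∈ Finset.univ.filter (fun j => j < i ∧ G.Adj (u i) (u j)), ω s(u i, u j)) ≤ τ (u i)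

/-- Unweighted activation process. -/
def ActiveU [Fintype V] [DecidableEq V] (G : SimpleGraph V) [DecidableRel G.Adj]
    (τ : V → ℕ) (A₀ : Finset V) : ℕ → Finset V
  | 0 => A₀
  | t + 1 => ActiveU G τ A₀ t ∪
      Finset.univ.filter (fun x => τ x ≤ ((ActiveU G τ A₀ t).filter (G.Adj x)).card)

def IsTargetSetU [Fintype V] [DecidableEq V] (G : SimpleGraph V) [DecidableRel G.Adj]
    (τ : V → ℕ) (A₀ : Finset V) : Prop :=
  ∀ v : V, ∃ t, v ∈ ActiveU G τ A₀ t

private lemma activeP_mono' [Fintype V] [DecidableEq V] (G : SimpleGraph V) [DecidableRel G.Adj]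
    (ω : Sym2 V → ℚ) (τ : V → ℚ) (p : V → ℚ) {s t : ℕ} (h : s ≤ t) :
    ActiveP G ω τ p s ⊆ ActiveP G ω τ p t := by
  induction t with
  | zero =>
    have : s = 0 := Nat.le_zero.mp h
    subst this; exact Finset.Subset.rfl
  | succ t ih =>
    rcases Nat.lt_or_ge s (t + 1) with h' | h'
    · exact (ih (Nat.lt_succ_iff.mp h')).trans Finset.subset_union_left
    · have : s = t + 1 := le_antisymm h h'
      subst this; exact Finset.Subset.rfl

private lemma key_act [Fintype V] [DecidableEq V] (G : SimpleGraph V) [DecidableRel G.Adj]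
    (ω : Sym2 V → ℚ) (τ : V → ℚ)
    (hω : ∀ e ∈ G.edgeSet, 0 ≤ ω e)
    (u : Fin (Fintype.card V) ≃ V) (i : Fin (Fintype.card V)) :
    u i ∈ ActiveP G ω τ (fun v => τ v -
      ∑ j ∈ Finset.univ.filter (fun j => j < u.symm v ∧ G.Adj v (u j)), ω s(v, u j)) (i : ℕ) := by
  suffices H : ∀ m : ℕ, ∀ i : Fin (Fintype.card V), (i : ℕ) = m →
      u i ∈ ActiveP G ω τ (fun v => τ v -
        ∑ j ∈ Finset.univ.filter (fun j => j < u.symm v ∧ G.Adj v (u j)), ω s(v, u j)) (i : ℕ) by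
    exact H (i : ℕ) i rfl
  intro m
  induction m using Nat.strongRecOn with
  | ind m ihm =>
    intro i hn
    have ih : ∀ j : Fin (Fintype.card V), j < i → u j ∈ ActiveP G ω τ (fun v => τ v -
        ∑ j ∈ Finset.univ.filter (fun j => j < u.symm v ∧ G.Adj v (u j)), ω s(v, u j)) (j : ℕ) :=
      fun j hj => ihm (j : ℕ) (hn ▸ Fin.lt_def.mp hj) j rfl
    clear ihm
    rcases Nat.eq_zero_or_pos (i : ℕ) with h0 | hpos
    · rw [h0]
      have hF : (Finset.univ.filter (fun j => j < u.symm (u i) ∧ G.Adj (u i) (u j))) = ∅ := by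
        apply Finset.filter_false_of_mem
        intro j _
        simp only [Equiv.symm_apply_apply]
        intro hj
        exact absurd (Fin.lt_def.mp hj.1) (by omega)
      simp only [ActiveP, Finset.mem_filter, Finset.mem_univ, true_and, hF,
        Finset.sum_empty, sub_zero, le_refl]
    · obtain ⟨k, hk⟩ : ∃ k, (i : ℕ) = k + 1 := ⟨(i : ℕ) - 1, by omega⟩
      rw [hk]
      apply Finset.mem_union_right
      rw [Finset.mem_filter]
      refine ⟨Finset.mem_univ _, ?_⟩
      have hS : (∑ j ∈ Finset.univ.filter (fun j => j < u.symm (u i) ∧ G.Adj (u i) (u j)),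
          ω s(u i, u j)) ≤ Influence G ω (ActiveP G ω τ (fun v => τ v -
            ∑ j ∈ Finset.univ.filter (fun j => j < u.symm v ∧ G.Adj v (u j)), ω s(v, u j)) k)
          (u i) := by
        have himg := Finset.sum_image (s := Finset.univ.filter
            (fun j => j < u.symm (u i) ∧ G.Adj (u i) (u j))) (f := fun y => ω s(u i, y))
          (g := u) (fun a _ b _ hab => u.injective hab)
        rw [← himg]
        apply Finset.sum_le_sum_of_subset_of_nonneg
        · intro y hy
          obtain ⟨j, hj, rfl⟩ := Finset.mem_image.mp hy
          rw [Finset.mem_filter] at hj ⊢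
          have hji : j < i := by simpa using hj.2.1
          refine ⟨?_, hj.2.2⟩
          have hjk : (j : ℕ) ≤ k := by have := Fin.lt_def.mp hji; omega
          exact activeP_mono' G ω τ _ hjk (ih j hji)
        · intro y hy _
          exact hω _ (G.mem_edgeSet.mpr (Finset.mem_filter.mp hy).2)
      simp only [Equiv.symm_apply_apply] at hS ⊢
      linarith

private lemma edge_sum_eq [Fintype V] [DecidableEq V] (G : SimpleGraph V) [DecidableRel G.Adj]
    (ω : Sym2 V → ℚ) (u : Fin (Fintype.card V) ≃ V) :
    (∑ v : V, ∑ j ∈ Finset.univ.filter (fun j => j < u.symm v ∧ G.Adj v (u j)), ω s(v, u j))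
      = ∑ e ∈ G.edgeFinset, ω e := by
  rw [← Equiv.sum_comp u (fun v => ∑ j ∈ Finset.univ.filter
      (fun j => j < u.symm v ∧ G.Adj v (u j)), ω s(v, u j))]
  simp only [Equiv.symm_apply_apply]
  have hprod : (∑ i : Fin (Fintype.card V), ∑ j ∈ Finset.univ.filter
        (fun j => j < i ∧ G.Adj (u i) (u j)), ω s(u i, u j))
      = ∑ q ∈ Finset.univ.filter (fun q : Fin (Fintype.card V) × Fin (Fintype.card V) =>
          q.2 < q.1 ∧ G.Adj (u q.1) (u q.2)), ω s(u q.1, u q.2) := by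
    rw [Finset.sum_filter, Fintype.sum_prod_type]
    simp [Finset.sum_filter]
  rw [hprod]
  refine Finset.sum_bij (fun q _ => s(u q.1, u q.2)) ?_ ?_ ?_ ?_
  · intro q hq
    rw [Finset.mem_filter] at hq
    exact SimpleGraph.mem_edgeFinset.mpr (G.mem_edgeSet.mpr hq.2.2)
  · intro q hq q' hq'
    rw [Finset.mem_filter] at hq hq'
    intro h
    rcases Sym2.eq_iff.mp h with ⟨h1, h2⟩ | ⟨h1, h2⟩
    · exact Prod.ext (u.injective h1) (u.injective h2)
    · have e1 : q.1 = q'.2 := u.injective h1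
      have e2 : q.2 = q'.1 := u.injective h2
      have l1 := hq.2.1
      have l2 := hq'.2.1
      rw [e1, e2] at l1
      exact absurd l2 (by omega)
  · intro e he
    rw [SimpleGraph.mem_edgeFinset] at he
    induction e with
    | _ a b =>
      have hadj : G.Adj a b := G.mem_edgeSet.mp he
      have hne : u.symm a ≠ u.symm b := fun h => hadj.ne (by
        have := congrArg u h; simpa using this)
      rcases lt_or_gt_of_ne hne with h | h
      · refine ⟨(u.symm b, u.symm a), ?_, ?_⟩
        · rw [Finset.mem_filter]
          simpa using ⟨h, hadj.symm⟩
        · simp [Sym2.eq_swap]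
      · refine ⟨(u.symm a, u.symm b), ?_, ?_⟩
        · rw [Finset.mem_filter]
          simpa using ⟨h, hadj⟩
        · simp
  · intro q hq
    rfl

/-- the incentive assignment `p(uᵢ) = τ(uᵢ) − (weight to earlier
vertices)` is a target vector of total size `∑ τ − ∑ ω`. -/
theorem deg_order_target_vector [Fintype V] [DecidableEq V] (G : SimpleGraph V)
    [DecidableRel G.Adj] (ω : Sym2 V → ℚ) (τ : V → ℚ)
    (hω : ∀ e ∈ G.edgeSet, 0 ≤ ω e)
    (u : Fin (Fintype.card V) ≃ V) (hu : IsDegOrder G ω τ u) :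
    IsTargetVector G ω τ (fun v => τ v -
      ∑ j ∈ Finset.univ.filter (fun j => j < u.symm v ∧ G.Adj v (u j)), ω s(v, u j)) ∧
    (∑ v : V, (τ v -
      ∑ j ∈ Finset.univ.filter (fun j => j < u.symm v ∧ G.Adj v (u j)), ω s(v, u j)))
      = ∑ v : V, τ v - ∑ e ∈ G.edgeFinset, ω e := by
  constructor
  · intro v
    refine ⟨(u.symm v : ℕ), ?_⟩
    have := key_act G ω τ hω u (u.symm v)
    simpa using this
  · rw [Finset.sum_sub_distrib, edge_sum_eq G ω u]
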